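/- Let B : ℝ³ → ℝ³ be a C² vector field with ∇·B = 0 and |B| > 0, let τ = B/|B|, and let p_Δ : ℝ³ → ℝ be C¹. Setting Ω = (p_Δ/|B|) τ, the identity B × (∇ × Ω) = ∇p_Δ − p_Δ ∇(ln |B|) − ∇·(p_Δ τ ⊗ τ) holds, where (∇·(p_Δ τ⊗τ))_i = ∂_j(p_Δ τ_i τ_j). -/

import Mathlib

open scoped BigOperators

noncomputable section

/-- Space: ℝ³ as functions `Fin 3 → ℝ`. -/
abbrev V3 := Fin 3 → ℝ

/-- Partial derivative of a scalar field in the `i`-th coordinate direction. -/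
def pd (i : Fin 3) (f : V3 → ℝ) (x : V3) : ℝ := fderiv ℝ f x (Pi.single i 1)

/-- Euclidean dot product on ℝ³. -/
def dot3 (a b : V3) : ℝ := ∑ i, a i * b i

/-- Cross product on ℝ³. -/
def cross3 (a b : V3) : V3 :=
  ![a 1 * b 2 - a 2 * b 1, a 2 * b 0 - a 0 * b 2, a 0 * b 1 - a 1 * b 0]

/-- Divergence of a vector field on ℝ³. -/
def div3 (F : V3 → V3) (x : V3) : ℝ := ∑ i, pd i (fun y => F y i) x

/-- Curl of a vector field on ℝ³. -/
def curl3 (F : V3 → V3) (x : V3) : V3 :=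
  ![pd 1 (fun y => F y 2) x - pd 2 (fun y => F y 1) x,
    pd 2 (fun y => F y 0) x - pd 0 (fun y => F y 2) x,
    pd 0 (fun y => F y 1) x - pd 1 (fun y => F y 0) x]

/-- Gradient of a scalar field on ℝ³. -/
def grad3 (f : V3 → ℝ) (x : V3) : V3 := fun i => pd i f x

/-- Euclidean norm on ℝ³. -/
def norm3 (a : V3) : ℝ := Real.sqrt (dot3 a a)

/-- Unit vector along a vector field. -/
def tau3 (B : V3 → V3) (x : V3) : V3 := fun i => B x i / norm3 (B x)

lemma pd_eq {f : V3 → ℝ} {L : V3 →L[ℝ] ℝ} {x : V3} (h : HasFDerivAt f L x) (i : Fin 3) :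
    pd i f x = L (Pi.single i 1) := by rw [pd, h.fderiv]

set_option maxHeartbeats 2000000 in

/-- With `∇·B = 0`, `|B| > 0`, `τ = B/|B|` and `Ω = (pΔ/|B|)τ`, the identity
`B × (∇×Ω) = ∇pΔ − pΔ ∇ln|B| − ∇·(pΔ τ⊗τ)` holds componentwise. -/
theorem anisotropy_curl_identity
    (B : V3 → V3) (pΔ : V3 → ℝ)
    (hB : ContDiff ℝ 2 B) (hp : ContDiff ℝ 1 pΔ)
    (hdiv : ∀ x, div3 B x = 0) (hpos : ∀ x, 0 < norm3 (B x)) :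
    ∀ (x : V3) (i : Fin 3),
      cross3 (B x) (curl3 (fun y => (pΔ y / norm3 (B y)) • tau3 B y) x) i
        = grad3 pΔ x i
          - pΔ x * grad3 (fun y => Real.log (norm3 (B y))) x i
          - ∑ j, pd j (fun y => pΔ y * tau3 B y i * tau3 B y j) x := by
  intro x i
  have hBd : DifferentiableAt ℝ B x := (hB.differentiable (by norm_num)).differentiableAt
  have hBx : HasFDerivAt B (fderiv ℝ B x) x := hBd.hasFDerivAt
  have hpx : HasFDerivAt pΔ (fderiv ℝ pΔ x) x := ((hp.differentiable (by norm_num)) x).hasFDerivAt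
  set LB : Fin 3 → (V3 →L[ℝ] ℝ) := fun k => (ContinuousLinearMap.proj k).comp (fderiv ℝ B x) with hLBdef
  have hBk : ∀ k, HasFDerivAt (fun y => B y k) (LB k) x := fun k => by
    exact ((ContinuousLinearMap.proj k : V3 →L[ℝ] ℝ).hasFDerivAt).comp x hBx
  set L2 : V3 →L[ℝ] ℝ := ∑ k : Fin 3, (B x k • LB k + B x k • LB k) with hL2def
  have hn2 : HasFDerivAt (fun y => dot3 (B y) (B y)) L2 x := by
    exact HasFDerivAt.fun_sum (fun k _ => (hBk k).mul (hBk k))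
  have hq : 0 < dot3 (B x) (B x) := Real.sqrt_pos.mp (hpos x)
  set n : ℝ := norm3 (B x) with hndef
  have hn0 : n ≠ 0 := ne_of_gt (hpos x)
  set LN : V3 →L[ℝ] ℝ := (1 / (2 * Real.sqrt (dot3 (B x) (B x)))) • L2 with hLNdef
  have hN : HasFDerivAt (fun y => norm3 (B y)) LN x :=
    (Real.hasDerivAt_sqrt (ne_of_gt hq)).comp_hasFDerivAt x hn2
  have hinv : HasFDerivAt (fun y => (norm3 (B y))⁻¹) ((-(n ^ 2)⁻¹) • LN) x :=
    (hasDerivAt_inv hn0).comp_hasFDerivAt x hN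
  have hlog : HasFDerivAt (fun y => Real.log (norm3 (B y))) (n⁻¹ • LN) x :=
    by have := (Real.hasDerivAt_log hn0).comp_hasFDerivAt x hN; exact this
  have hsq : Real.sqrt (dot3 (B x) (B x)) = n := rfl
  have hG : ∀ k, HasFDerivAt (fun y => pΔ y * (norm3 (B y))⁻¹ * (B y k * (norm3 (B y))⁻¹))
      ((pΔ x * (norm3 (B x))⁻¹) • (B x k • (-(n ^ 2)⁻¹ • LN) + (norm3 (B x))⁻¹ • LB k)
        + (B x k * (norm3 (B x))⁻¹) • ((pΔ x • (-(n ^ 2)⁻¹ • LN)) + (norm3 (B x))⁻¹ • fderiv ℝ pΔ x)) x :=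
    fun k => (hpx.mul hinv).mul ((hBk k).mul hinv)
  have hT : ∀ a k, HasFDerivAt (fun y => pΔ y * (B y a * (norm3 (B y))⁻¹) * (B y k * (norm3 (B y))⁻¹))
      ((pΔ x * (B x a * (norm3 (B x))⁻¹)) • (B x k • (-(n ^ 2)⁻¹ • LN) + (norm3 (B x))⁻¹ • LB k)
        + (B x k * (norm3 (B x))⁻¹) • ((pΔ x • (B x a • (-(n ^ 2)⁻¹ • LN) + (norm3 (B x))⁻¹ • LB a))
            + (B x a * (norm3 (B x))⁻¹) • fderiv ℝ pΔ x)) x :=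
    fun a k => (hpx.mul ((hBk a).mul hinv)).mul ((hBk k).mul hinv)
  have htr : fderiv ℝ B x (Pi.single 2 1) 2
      = -(fderiv ℝ B x (Pi.single 0 1) 0) - fderiv ℝ B x (Pi.single 1 1) 1 := by
    have h := hdiv x
    simp only [div3, Fin.sum_univ_three, pd_eq (hBk 0), pd_eq (hBk 1), pd_eq (hBk 2), hLBdef,
      ContinuousLinearMap.comp_apply, ContinuousLinearMap.proj_apply] at h
    linarith [h]
  fin_cases i <;>
    simp only [Fin.zero_eta, Fin.mk_one, Fin.reduceFinMk,
      cross3, curl3, grad3, tau3, Pi.smul_apply, smul_eq_mul, div_eq_mul_inv,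
      Fin.sum_univ_three, Matrix.cons_val_zero, Matrix.cons_val_one, Matrix.head_cons,
      Matrix.cons_val_two, Matrix.tail_cons, Fin.isValue] <;>
    simp only [pd_eq (hG 0), pd_eq (hG 1), pd_eq (hG 2),
      pd_eq (hT 0 0), pd_eq (hT 0 1), pd_eq (hT 0 2),
      pd_eq (hT 1 0), pd_eq (hT 1 1), pd_eq (hT 1 2),
      pd_eq (hT 2 0), pd_eq (hT 2 1), pd_eq (hT 2 2),
      pd_eq hlog, pd_eq hpx, hLNdef, hL2def, hsq,
      ContinuousLinearMap.add_apply, ContinuousLinearMap.smul_apply,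
      ContinuousLinearMap.sum_apply, ContinuousLinearMap.comp_apply,
      ContinuousLinearMap.proj_apply, smul_eq_mul] <;>
    simp only [Fin.sum_univ_three, hLBdef, ContinuousLinearMap.comp_apply,
      ContinuousLinearMap.proj_apply, ← hndef]
  all_goals (
    set p := pΔ x
    set b0 := B x 0; set b1 := B x 1; set b2 := B x 2
    set dp0 := fderiv ℝ pΔ x (Pi.single 0 1); set dp1 := fderiv ℝ pΔ x (Pi.single 1 1)
    set dp2 := fderiv ℝ pΔ x (Pi.single 2 1)
    set d00 := fderiv ℝ B x (Pi.single 0 1) 0; set d01 := fderiv ℝ B x (Pi.single 0 1) 1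
    set d02 := fderiv ℝ B x (Pi.single 0 1) 2
    set d10 := fderiv ℝ B x (Pi.single 1 1) 0; set d11 := fderiv ℝ B x (Pi.single 1 1) 1
    set d12 := fderiv ℝ B x (Pi.single 1 1) 2
    set d20 := fderiv ℝ B x (Pi.single 2 1) 0; set d21 := fderiv ℝ B x (Pi.single 2 1) 1
    set d22 := fderiv ℝ B x (Pi.single 2 1) 2 with hd22def
    have h22 : d22 = -d00 - d11 := htr
    have hs : n ^ 2 = b0 * b0 + b1 * b1 + b2 * b2 := by
      rw [hndef, norm3, Real.sq_sqrt hq.le, dot3, Fin.sum_univ_three]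
    rw [h22] at *
    field_simp)
  · linear_combination (4*p*b2*d02 + 4*p*b1*d01 + 4*p*b0*d00 - 2*n^2*dp0) * hs
  · linear_combination (4*p*b2*d12 + 4*p*b1*d11 + 4*p*b0*d10 - 2*n^2*dp1) * hs
  · linear_combination (-4*p*b2*d11 - 4*p*b2*d00 + 4*p*b1*d21 + 4*p*b0*d20
      - 2*n^2*dp2) * hs
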